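/- Let m be a positive integer and let α ∈ F_{2^m} be such that the polynomial x³ + x + α has no root in F_{2^m}. Then the equation a³ + α·b·a² + (α²·b² + b² + 1)·a + α³·b³ + α·b² + α = 0 has exactly one solution (a, b) in F_{2^m} × F_{2^m}, namely (a, b) = (α, 1). -/

import Mathlib

/-- If x³ + x + α has no root in F_{2^m}, then the equation
a³ + α·b·a² + (α²·b² + b² + 1)·a + α³·b³ + α·b² + α = 0 has exactly one solution
(a, b) in F_{2^m} × F_{2^m}, namely (a, b) = (α, 1). -/
theorem stmt_10 (m : ℕ) (hm : 0 < m)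
    (K : Type*) [Field K] [Fintype K] [CharP K 2] (hcard : Fintype.card K = 2 ^ m)
    (α : K) (hα : ∀ x : K, x ^ 3 + x + α ≠ 0) :
    {p : K × K | p.1 ^ 3 + α * p.2 * p.1 ^ 2 + (α ^ 2 * p.2 ^ 2 + p.2 ^ 2 + 1) * p.1
        + α ^ 3 * p.2 ^ 3 + α * p.2 ^ 2 + α = 0} = {(α, 1)} := by
  have h2 : (2 : K) = 0 := CharTwo.two_eq_zero
  ext ⟨a, b⟩
  simp only [Set.mem_setOf_eq, Set.mem_singleton_iff, Prod.mk.injEq]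
  constructor
  · intro h
    have key : (a + α * b) ^ 3 + (b + 1) ^ 2 * (a + α * b) + α * (b + 1) ^ 3 = 0 := by
      linear_combination h + (2*α*b + 2*α*b^2 + α*b^3 + a*b + a*b^2*α^2 + a^2*b*α) * h2
    have hb : b = 1 := by
      by_contra hb
      have hd : b + 1 ≠ 0 := by
        intro hd
        apply hb
        linear_combination hd - h2
      apply hα ((a + α * b) / (b + 1))
      have heq : ((a + α * b) / (b + 1)) ^ 3 + ((a + α * b) / (b + 1)) + α
          = ((a + α * b) ^ 3 + (b + 1) ^ 2 * (a + α * b) + α * (b + 1) ^ 3) / (b + 1) ^ 3 := by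
        field_simp
      rw [heq, key, zero_div]
    subst hb
    have ha : (a + α) ^ 3 = 0 := by linear_combination key + (-2*(a + α) - 4*α) * h2
    have : a + α = 0 := by
      exact pow_eq_zero_iff (by norm_num) |>.mp ha
    constructor
    · linear_combination this - α * h2
    · rfl
  · rintro ⟨rfl, rfl⟩
    linear_combination (2*a + 2*a^3) * h2
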